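/- arXiv:0806.4666 — 2 statements merged into one kernel-verified Lean document; each statement's English description precedes it below -/
import Mathlib

section
/- Let μ > 0 and let v_{p,q}(r) = φ_{p,q}((r^{2μ}-1)/(r^{2μ}+1)) where φ_{p,q}(t) = (1-t²)^{q/(2μ)} F(p + 2q/μ + 1, -p, q/μ + 1, (1-t)/2) and F is the Gauss hypergeometric function. Then v_{p,q} satisfies the ODE v'' + (1/r) v' + (λ · 4μ²r^{2μ-2}/(r^{2μ}+1)² - q²/r²) v = 0 on (0,∞) with λ = (p + q/μ)(1 + p + q/μ). -/
/-- The Pochhammer symbol `(α)_i = α(α+1)⋯(α+i-1)`. -/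
noncomputable def poch (α : ℝ) (i : ℕ) : ℝ := ∏ j ∈ Finset.range i, (α + j)

/-- The Gauss hypergeometric series, truncated at degree `deg` (the series
terminates when `b` is a nonpositive integer `-deg`). -/
noncomputable def hyperF (a b c x : ℝ) (deg : ℕ) : ℝ :=
  ∑ i ∈ Finset.range (deg + 1), poch a i * poch b i / (Nat.factorial i * poch c i) * x ^ i

lemma poch_succ (α : ℝ) (k : ℕ) : poch α (k+1) = poch α k * (α + k) :=
  Finset.prod_range_succ _ _

lemma poch_pos {α : ℝ} (hα : 0 < α) (i : ℕ) : 0 < poch α i :=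
  Finset.prod_pos fun j _ => by positivity

noncomputable def gg (μ a α r : ℝ) : ℝ := r ^ a * (r ^ (2*μ) + 1) ^ (-α)

/-- coefficients of the expansion of `v` -/
noncomputable def CC (μ : ℝ) (p q : ℕ) (k : ℕ) : ℝ :=
  (4:ℝ) ^ ((q:ℝ)/(2*μ)) *
    (poch ((p:ℝ) + 2*q/μ + 1) k * poch (-(p:ℝ)) k /
      (Nat.factorial k * poch ((q:ℝ)/μ + 1) k))

lemma coeff_rec (μ : ℝ) (hμ : 0 < μ) (p q : ℕ) (k : ℕ) :
    ((k:ℝ)+1) * ((q:ℝ)/μ + k + 1) *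
      (poch ((p:ℝ) + 2*q/μ + 1) (k+1) * poch (-(p:ℝ)) (k+1) /
        (Nat.factorial (k+1) * poch ((q:ℝ)/μ + 1) (k+1)))
    + ((((p:ℝ) + q/μ) * (1 + p + q/μ)) - ((q:ℝ)/μ + k) * ((q:ℝ)/μ + k + 1)) *
      (poch ((p:ℝ) + 2*q/μ + 1) k * poch (-(p:ℝ)) k /
        (Nat.factorial k * poch ((q:ℝ)/μ + 1) k)) = 0 := by
  have h1 : (0:ℝ) < poch ((q:ℝ)/μ + 1) k := poch_pos (by positivity) k
  have h2 : (0:ℝ) < (Nat.factorial k : ℝ) := by positivity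
  have h3 : (0:ℝ) < (q:ℝ)/μ + 1 + k := by positivity
  have h4 : (0:ℝ) < (k:ℝ) + 1 := by positivity
  set X : ℝ := poch ((p:ℝ) + 2*q/μ + 1) k * poch (-(p:ℝ)) k /
      (Nat.factorial k * poch ((q:ℝ)/μ + 1) k) with hX
  have e1 : poch ((p:ℝ) + 2*q/μ + 1) (k+1) * poch (-(p:ℝ)) (k+1) /
        (Nat.factorial (k+1) * poch ((q:ℝ)/μ + 1) (k+1))
      = (((p:ℝ) + 2*q/μ + 1 + k) * (-(p:ℝ) + k) / (((k:ℝ)+1) * ((q:ℝ)/μ + 1 + k))) * X := by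
    rw [poch_succ, poch_succ, poch_succ, hX]
    push_cast [Nat.factorial_succ]
    field_simp
  rw [e1]
  have e2 : ((k:ℝ)+1) * ((q:ℝ)/μ + k + 1) *
      ((((p:ℝ) + 2*q/μ + 1 + k) * (-(p:ℝ) + k) / (((k:ℝ)+1) * ((q:ℝ)/μ + 1 + k))) * X)
      = (((p:ℝ) + 2*q/μ + 1 + k) * (-(p:ℝ) + k)) * X := by
    field_simp
    ring
  rw [e2]
  have e3 : (((p:ℝ) + 2*q/μ + 1 + k) * (-(p:ℝ) + k))
      = -((((p:ℝ) + q/μ) * (1 + p + q/μ)) - ((q:ℝ)/μ + k) * ((q:ℝ)/μ + k + 1)) := by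
    field_simp
    ring
  rw [e3]
  ring

lemma s_pos {μ r : ℝ} (hr : 0 < r) : 0 < r ^ (2*μ) + 1 := by positivity

lemma gg_deriv (μ a α : ℝ) {r : ℝ} (hr : 0 < r) :
    HasDerivAt (gg μ a α)
      (a * gg μ (a-1) α r - 2*μ*α * gg μ (a+(2*μ-1)) (α+1) r) r := by
  have h1 : HasDerivAt (fun x : ℝ => x ^ a) (a * r ^ (a-1)) r :=
    Real.hasDerivAt_rpow_const (Or.inl hr.ne')
  have h2 : HasDerivAt (fun x : ℝ => x ^ (2*μ) + 1) (2*μ * r ^ (2*μ-1)) r :=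
    (Real.hasDerivAt_rpow_const (Or.inl hr.ne')).add_const 1
  have h3 : HasDerivAt (fun x : ℝ => (x ^ (2*μ) + 1) ^ (-α))
      (2*μ * r ^ (2*μ-1) * (-α) * (r ^ (2*μ) + 1) ^ (-α-1)) r :=
    h2.rpow_const (Or.inl (s_pos (μ := μ) hr).ne')
  have h4 := h1.mul h3
  refine h4.congr_deriv ?_
  simp only [gg]
  rw [Real.rpow_add hr, show -(α+1) = -α-1 by ring, Real.rpow_sub hr, Real.rpow_one]
  ring

lemma v_rep (μ : ℝ) (hμ : 0 < μ) (p q : ℕ) {x : ℝ} (hx : 0 < x) :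
    (1 - ((x ^ (2*μ) - 1) / (x ^ (2*μ) + 1)) ^ 2) ^ ((q:ℝ) / (2*μ)) *
      hyperF ((p:ℝ) + 2*q/μ + 1) (-(p:ℝ)) ((q:ℝ)/μ + 1)
        ((1 - (x ^ (2*μ) - 1) / (x ^ (2*μ) + 1)) / 2) p
    = ∑ k ∈ Finset.range (p+1), CC μ p q k * gg μ (q:ℝ) ((q:ℝ)/μ + k) x := by
  have hu : 0 < x ^ (2*μ) := Real.rpow_pos_of_pos hx _
  have hs : 0 < x ^ (2*μ) + 1 := by positivity
  have h1 : 1 - ((x ^ (2*μ) - 1) / (x ^ (2*μ) + 1)) ^ 2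
      = 4 * x ^ (2*μ) / (x ^ (2*μ) + 1) ^ 2 := by field_simp; ring
  have h2 : (1 - (x ^ (2*μ) - 1) / (x ^ (2*μ) + 1)) / 2 = 1 / (x ^ (2*μ) + 1) := by
    field_simp; ring
  rw [h1, h2]
  have hpow : (4 * x ^ (2*μ) / (x ^ (2*μ) + 1) ^ 2) ^ ((q:ℝ)/(2*μ))
      = (4:ℝ) ^ ((q:ℝ)/(2*μ)) * x ^ ((q:ℝ)) * (x ^ (2*μ) + 1) ^ (-((q:ℝ)/μ)) := by
    rw [Real.div_rpow (by positivity) (by positivity),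
      Real.mul_rpow (by norm_num) hu.le,
      ← Real.rpow_mul hx.le, show 2*μ*((q:ℝ)/(2*μ)) = (q:ℝ) by field_simp,
      ← Real.rpow_natCast (x ^ (2*μ) + 1) 2, ← Real.rpow_mul hs.le,
      show ((2:ℕ):ℝ)*((q:ℝ)/(2*μ)) = (q:ℝ)/μ by push_cast; field_simp,
      div_eq_mul_inv, ← Real.rpow_neg hs.le]
  rw [hpow, hyperF, Finset.mul_sum]
  refine Finset.sum_congr rfl fun i hi => ?_
  have hterm : (x ^ (2*μ) + 1) ^ (-((q:ℝ)/μ)) * (1 / (x ^ (2*μ) + 1)) ^ i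
      = (x ^ (2*μ) + 1) ^ (-((q:ℝ)/μ + (i:ℝ))) := by
    rw [one_div, inv_pow, ← Real.rpow_natCast (x ^ (2*μ) + 1) i, ← Real.rpow_neg hs.le,
      ← Real.rpow_add hs, show -((q:ℝ)/μ) + -(i:ℝ) = -((q:ℝ)/μ + (i:ℝ)) by ring]
  rw [CC, gg, ← hterm]
  ring

lemma key_id (μ : ℝ) (hμ : 0 < μ) (q : ℕ) (lam : ℝ) (k : ℕ) {r : ℝ} (hr : 0 < r) :
    ((q:ℝ) * (((q:ℝ)-1) * gg μ ((q:ℝ)-1-1) ((q:ℝ)/μ+↑k) r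
        - 2*μ*((q:ℝ)/μ+↑k) * gg μ ((q:ℝ)-1+(2*μ-1)) ((q:ℝ)/μ+↑k+1) r)
      - 2*μ*((q:ℝ)/μ+↑k) * (((q:ℝ)+(2*μ-1)) * gg μ ((q:ℝ)+(2*μ-1)-1) ((q:ℝ)/μ+↑k+1) r
        - 2*μ*((q:ℝ)/μ+↑k+1) * gg μ ((q:ℝ)+(2*μ-1)+(2*μ-1)) ((q:ℝ)/μ+↑k+1+1) r))
    + (1/r) * ((q:ℝ) * gg μ ((q:ℝ)-1) ((q:ℝ)/μ+↑k) r
        - 2*μ*((q:ℝ)/μ+↑k) * gg μ ((q:ℝ)+(2*μ-1)) ((q:ℝ)/μ+↑k+1) r)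
    + (lam * (4*μ^2 * r ^ (2*μ-2) / (r ^ (2*μ) + 1)^2) - (q:ℝ)^2 / r^2) *
        gg μ (q:ℝ) ((q:ℝ)/μ+↑k) r
    = 4*μ^2 * ((↑k*((q:ℝ)/μ+↑k)) *
          (r ^ ((q:ℝ)+(2*μ-2)) * (r ^ (2*μ) + 1) ^ (-((q:ℝ)/μ+↑k+1)))
        + (lam - ((q:ℝ)/μ+↑k)*((q:ℝ)/μ+↑k+1)) *
          (r ^ ((q:ℝ)+(2*μ-2)) * (r ^ (2*μ) + 1) ^ (-((q:ℝ)/μ+↑k+2)))) := by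
  have hs : (0:ℝ) < r ^ (2*μ) + 1 := by positivity
  have hk : ((r ^ (2*μ) + 1):ℝ)^k ≠ 0 := by positivity
  have hqμ : (r ^ (2*μ) + 1) ^ ((q:ℝ)/μ) ≠ 0 := by positivity
  simp only [gg, Real.rpow_sub hr, Real.rpow_add hr, Real.rpow_neg hs.le,
    Real.rpow_add hs, Real.rpow_one, Real.rpow_two, Real.rpow_natCast]
  field_simp
  ring

lemma sum_shift (n : ℕ) (A B h : ℕ → ℝ)
    (hA0 : A 0 = 0) (hBn : B n = 0) (hrec : ∀ k, A (k+1) + B k = 0) :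
    ∑ k ∈ Finset.range (n+1), (A k * h (k+1) + B k * h (k+2)) = 0 := by
  rw [Finset.sum_add_distrib,
    Finset.sum_range_succ' (fun k => A k * h (k+1)) n,
    Finset.sum_range_succ (fun k => B k * h (k+2)) n, hA0, hBn, zero_mul, zero_mul,
    add_zero, add_zero, ← Finset.sum_add_distrib]
  refine Finset.sum_eq_zero fun k _ => ?_
  have hh : h (k+1+1) = h (k+2) := by norm_num
  rw [hh, ← add_mul, hrec k, zero_mul]

attribute [irreducible] gg

noncomputable def WW (μ : ℝ) (p q : ℕ) (x : ℝ) : ℝ :=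
  ∑ k ∈ Finset.range (p+1), CC μ p q k * gg μ (q:ℝ) ((q:ℝ)/μ + k) x

noncomputable def WW1 (μ : ℝ) (p q : ℕ) (x : ℝ) : ℝ :=
  ∑ k ∈ Finset.range (p+1), CC μ p q k *
    ((q:ℝ) * gg μ ((q:ℝ)-1) ((q:ℝ)/μ+↑k) x
      - 2*μ*((q:ℝ)/μ+↑k) * gg μ ((q:ℝ)+(2*μ-1)) ((q:ℝ)/μ+↑k+1) x)

noncomputable def WW2 (μ : ℝ) (p q : ℕ) (x : ℝ) : ℝ :=
  ∑ k ∈ Finset.range (p+1), CC μ p q k *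
    ((q:ℝ) * (((q:ℝ)-1) * gg μ ((q:ℝ)-1-1) ((q:ℝ)/μ+↑k) x
        - 2*μ*((q:ℝ)/μ+↑k) * gg μ ((q:ℝ)-1+(2*μ-1)) ((q:ℝ)/μ+↑k+1) x)
      - 2*μ*((q:ℝ)/μ+↑k) * (((q:ℝ)+(2*μ-1)) * gg μ ((q:ℝ)+(2*μ-1)-1) ((q:ℝ)/μ+↑k+1) x
        - 2*μ*((q:ℝ)/μ+↑k+1) * gg μ ((q:ℝ)+(2*μ-1)+(2*μ-1)) ((q:ℝ)/μ+↑k+1+1) x))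

lemma WW_deriv (μ : ℝ) (p q : ℕ) {x : ℝ} (hx : 0 < x) :
    HasDerivAt (WW μ p q) (WW1 μ p q x) x := by
  have h : HasDerivAt (fun y => ∑ k ∈ Finset.range (p+1),
        CC μ p q k * gg μ (q:ℝ) ((q:ℝ)/μ + k) y)
      (∑ k ∈ Finset.range (p+1), CC μ p q k *
        ((q:ℝ) * gg μ ((q:ℝ)-1) ((q:ℝ)/μ+↑k) x
          - 2*μ*((q:ℝ)/μ+↑k) * gg μ ((q:ℝ)+(2*μ-1)) ((q:ℝ)/μ+↑k+1) x)) x :=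
    HasDerivAt.fun_sum fun k _ =>
      ((gg_deriv μ (q:ℝ) ((q:ℝ)/μ+↑k) hx).const_mul (CC μ p q k))
  exact h

lemma WW1_deriv (μ : ℝ) (p q : ℕ) {x : ℝ} (hx : 0 < x) :
    HasDerivAt (WW1 μ p q) (WW2 μ p q x) x := by
  have h : HasDerivAt (fun y => ∑ k ∈ Finset.range (p+1), CC μ p q k *
        ((q:ℝ) * gg μ ((q:ℝ)-1) ((q:ℝ)/μ+↑k) y
          - 2*μ*((q:ℝ)/μ+↑k) * gg μ ((q:ℝ)+(2*μ-1)) ((q:ℝ)/μ+↑k+1) y))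
      (∑ k ∈ Finset.range (p+1), CC μ p q k *
        ((q:ℝ) * (((q:ℝ)-1) * gg μ ((q:ℝ)-1-1) ((q:ℝ)/μ+↑k) x
            - 2*μ*((q:ℝ)/μ+↑k) * gg μ ((q:ℝ)-1+(2*μ-1)) ((q:ℝ)/μ+↑k+1) x)
          - 2*μ*((q:ℝ)/μ+↑k) * (((q:ℝ)+(2*μ-1)) * gg μ ((q:ℝ)+(2*μ-1)-1) ((q:ℝ)/μ+↑k+1) x
            - 2*μ*((q:ℝ)/μ+↑k+1) * gg μ ((q:ℝ)+(2*μ-1)+(2*μ-1)) ((q:ℝ)/μ+↑k+1+1) x))) x :=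
    HasDerivAt.fun_sum fun k _ =>
      (((gg_deriv μ ((q:ℝ)-1) ((q:ℝ)/μ+↑k) hx).const_mul (q:ℝ)).sub
        ((gg_deriv μ ((q:ℝ)+(2*μ-1)) ((q:ℝ)/μ+↑k+1) hx).const_mul
          (2*μ*((q:ℝ)/μ+↑k)))).const_mul (CC μ p q k)
  exact h

lemma final_sum (μ : ℝ) (hμ : 0 < μ) (p q : ℕ) {r : ℝ} (hr : 0 < r) :
    WW2 μ p q r + 1 / r * WW1 μ p q r +
      ((((p:ℝ) + q/μ) * (1 + p + q/μ)) * (4 * μ ^ 2 * r ^ (2*μ-2) / (r ^ (2*μ) + 1) ^ 2)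
        - (q:ℝ) ^ 2 / r ^ 2) * WW μ p q r = 0 := by
  simp only [WW, WW1, WW2]
  rw [Finset.mul_sum, Finset.mul_sum, ← Finset.sum_add_distrib, ← Finset.sum_add_distrib]
  have hstep : ∀ k ∈ Finset.range (p+1),
      (CC μ p q k *
        ((q:ℝ) * (((q:ℝ)-1) * gg μ ((q:ℝ)-1-1) ((q:ℝ)/μ+↑k) r
            - 2*μ*((q:ℝ)/μ+↑k) * gg μ ((q:ℝ)-1+(2*μ-1)) ((q:ℝ)/μ+↑k+1) r)
          - 2*μ*((q:ℝ)/μ+↑k) * (((q:ℝ)+(2*μ-1)) * gg μ ((q:ℝ)+(2*μ-1)-1) ((q:ℝ)/μ+↑k+1) r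
            - 2*μ*((q:ℝ)/μ+↑k+1) * gg μ ((q:ℝ)+(2*μ-1)+(2*μ-1)) ((q:ℝ)/μ+↑k+1+1) r))
        + 1 / r * (CC μ p q k * ((q:ℝ) * gg μ ((q:ℝ)-1) ((q:ℝ)/μ+↑k) r
            - 2*μ*((q:ℝ)/μ+↑k) * gg μ ((q:ℝ)+(2*μ-1)) ((q:ℝ)/μ+↑k+1) r))
        + ((((p:ℝ) + q/μ) * (1 + p + q/μ)) * (4 * μ ^ 2 * r ^ (2*μ-2) / (r ^ (2*μ) + 1) ^ 2)
            - (q:ℝ) ^ 2 / r ^ 2) * (CC μ p q k * gg μ (q:ℝ) ((q:ℝ)/μ+↑k) r))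
      = (CC μ p q k * (4*μ^2 * (↑k*((q:ℝ)/μ+↑k)))) *
          (r ^ ((q:ℝ)+(2*μ-2)) * (r ^ (2*μ) + 1) ^ (-((q:ℝ)/μ+↑(k+1))))
        + (CC μ p q k * (4*μ^2 * ((((p:ℝ) + q/μ) * (1 + p + q/μ))
              - ((q:ℝ)/μ+↑k)*((q:ℝ)/μ+↑k+1)))) *
          (r ^ ((q:ℝ)+(2*μ-2)) * (r ^ (2*μ) + 1) ^ (-((q:ℝ)/μ+↑(k+2)))) := by
    intro k _
    have h := key_id μ hμ q (((p:ℝ) + q/μ) * (1 + p + q/μ)) k hr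
    rw [show ((q:ℝ)/μ+↑(k+1)) = ((q:ℝ)/μ+↑k+1) by push_cast; ring,
      show ((q:ℝ)/μ+↑(k+2)) = ((q:ℝ)/μ+↑k+2) by push_cast; ring]
    calc _ = CC μ p q k *
        (((q:ℝ) * (((q:ℝ)-1) * gg μ ((q:ℝ)-1-1) ((q:ℝ)/μ+↑k) r
            - 2*μ*((q:ℝ)/μ+↑k) * gg μ ((q:ℝ)-1+(2*μ-1)) ((q:ℝ)/μ+↑k+1) r)
          - 2*μ*((q:ℝ)/μ+↑k) * (((q:ℝ)+(2*μ-1)) * gg μ ((q:ℝ)+(2*μ-1)-1) ((q:ℝ)/μ+↑k+1) r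
            - 2*μ*((q:ℝ)/μ+↑k+1) * gg μ ((q:ℝ)+(2*μ-1)+(2*μ-1)) ((q:ℝ)/μ+↑k+1+1) r))
        + (1/r) * ((q:ℝ) * gg μ ((q:ℝ)-1) ((q:ℝ)/μ+↑k) r
            - 2*μ*((q:ℝ)/μ+↑k) * gg μ ((q:ℝ)+(2*μ-1)) ((q:ℝ)/μ+↑k+1) r)
        + ((((p:ℝ) + q/μ) * (1 + p + q/μ)) * (4*μ^2 * r ^ (2*μ-2) / (r ^ (2*μ) + 1)^2)
            - (q:ℝ)^2 / r^2) * gg μ (q:ℝ) ((q:ℝ)/μ+↑k) r) := by ring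
      _ = _ := by rw [h]; ring
  rw [Finset.sum_congr rfl hstep]
  refine sum_shift p
    (fun k => CC μ p q k * (4*μ^2 * (↑k*((q:ℝ)/μ+↑k))))
    (fun k => CC μ p q k * (4*μ^2 * ((((p:ℝ) + q/μ) * (1 + p + q/μ))
        - ((q:ℝ)/μ+↑k)*((q:ℝ)/μ+↑k+1))))
    (fun j => r ^ ((q:ℝ)+(2*μ-2)) * (r ^ (2*μ) + 1) ^ (-((q:ℝ)/μ+↑j)))
    (by norm_num) (by push_cast; ring) ?_
  intro k
  have h := coeff_rec μ hμ p q k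
  simp only [CC]
  push_cast
  linear_combination (4*μ^2 * (4:ℝ)^((q:ℝ)/(2*μ))) * h

theorem stmt_4 (μ : ℝ) (hμ : 0 < μ) (p q : ℕ) :
    let lam : ℝ := ((p : ℝ) + q / μ) * (1 + p + q / μ)
    let φ : ℝ → ℝ := fun t =>
      (1 - t ^ 2) ^ ((q : ℝ) / (2 * μ)) *
        hyperF ((p : ℝ) + 2 * q / μ + 1) (-(p : ℝ)) ((q : ℝ) / μ + 1) ((1 - t) / 2) p
    let v : ℝ → ℝ := fun r => φ ((r ^ (2 * μ) - 1) / (r ^ (2 * μ) + 1))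
    ∀ r : ℝ, 0 < r →
      deriv (deriv v) r + (1 / r) * deriv v r +
        (lam * (4 * μ ^ 2 * r ^ (2 * μ - 2) / (r ^ (2 * μ) + 1) ^ 2)
          - (q : ℝ) ^ 2 / r ^ 2) * v r = 0 := by
  intro lam φ v r hr
  have hvW : ∀ x ∈ Set.Ioi (0:ℝ), v x = WW μ p q x := by
    intro x hx
    exact v_rep μ hμ p q hx
  have hdv : ∀ x ∈ Set.Ioi (0:ℝ), deriv v x = WW1 μ p q x := by
    intro x hx
    have he : v =ᶠ[nhds x] WW μ p q := Filter.eventuallyEq_of_mem (isOpen_Ioi.mem_nhds hx) hvW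
    rw [he.deriv_eq, (WW_deriv μ p q hx).deriv]
  have hd2 : deriv (deriv v) r = WW2 μ p q r := by
    have he : deriv v =ᶠ[nhds r] WW1 μ p q :=
      Filter.eventuallyEq_of_mem (isOpen_Ioi.mem_nhds hr) hdv
    rw [he.deriv_eq, (WW1_deriv μ p q hr).deriv]
  rw [hd2, hdv r hr, hvW r hr]
  exact final_sum μ hμ p q hr
end

section
/- If z̃(z) is a function near 0 in ℂ with (z/z̃)^m → 1 and z^m − z̃^m = O(|z|^{α+m}) for some integer m ≥ 1 and α > 0, then z − z̃ = O(|z|^{α+1}). -/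
open Topology Filter Asymptotics

theorem stmt_16 (m : ℕ) (hm : 1 ≤ m) (α : ℝ) (hα : 0 < α) (ztil : ℂ → ℂ)
    (h0 : Tendsto (fun z => z / ztil z) (𝓝[≠] (0 : ℂ)) (𝓝 1))
    (h1 : Tendsto (fun z => (z / ztil z) ^ m) (𝓝[≠] (0 : ℂ)) (𝓝 1))
    (h2 : (fun z => z ^ m - ztil z ^ m) =O[𝓝[≠] (0 : ℂ)]
      fun z => ‖z‖ ^ (α + m)) :
    (fun z => z - ztil z) =O[𝓝[≠] (0 : ℂ)] fun z => ‖z‖ ^ (α + 1) := by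
  clear h1
  have hz : ∀ᶠ z in 𝓝[≠] (0:ℂ), z ≠ 0 := eventually_mem_nhdsWithin
  have hu : Tendsto (fun z => ztil z / z) (𝓝[≠] (0:ℂ)) (𝓝 1) := by
    simpa [inv_div] using h0.inv₀ one_ne_zero
  have hS : Tendsto
      (fun z => ‖∑ i ∈ Finset.range m, (ztil z / z) ^ (m - 1 - i)‖)
      (𝓝[≠] (0:ℂ)) (𝓝 (m:ℝ)) := by
    have h := tendsto_finset_sum (Finset.range m)
      (fun i _ => hu.pow (m - 1 - i))
    simp only [one_pow, Finset.sum_const, Finset.card_range, nsmul_eq_mul,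
      mul_one] at h
    simpa using h.norm
  have hSlb : ∀ᶠ z in 𝓝[≠] (0:ℂ),
      (m:ℝ)/2 ≤ ‖∑ i ∈ Finset.range m, (ztil z / z) ^ (m - 1 - i)‖ := by
    apply hS.eventually_const_le
    have : (1:ℝ) ≤ (m:ℝ) := by exact_mod_cast hm
    linarith
  obtain ⟨C, hC⟩ := h2.bound
  rw [isBigO_iff]
  refine ⟨C * (2 / m), ?_⟩
  filter_upwards [hz, hSlb, hC] with z hz0 hlb hub
  set S := ∑ i ∈ Finset.range m, (ztil z / z) ^ (m - 1 - i) with hSdef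
  have habs : (0:ℝ) < ‖z‖ := by
    simpa using hz0
  have hkey : (z - ztil z) * (z ^ (m - 1) * S) = z ^ m - ztil z ^ m := by
    have hgeom := geom_sum₂_mul z (ztil z) m
    rw [← hgeom]
    rw [mul_comm]
    congr 1
    rw [hSdef, Finset.mul_sum]
    apply Finset.sum_congr rfl
    intro i hi
    have hi' : i < m := Finset.mem_range.mp hi
    have hile : i ≤ m - 1 := by omega
    have : z ^ (m - 1) = z ^ i * z ^ (m - 1 - i) := by
      rw [← pow_add]; congr 1; omega
    rw [this, div_pow]
    field_simp
  -- norms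
  have hnorm : ‖z - ztil z‖ * (‖z‖ ^ (m - 1) * ‖S‖)
      ≤ C * ‖z‖ ^ (α + m) := by
    calc ‖z - ztil z‖ * (‖z‖ ^ (m - 1) * ‖S‖)
        = ‖(z - ztil z) * (z ^ (m - 1) * S)‖ := by
          rw [norm_mul, norm_mul, norm_pow]
      _ = ‖z ^ m - ztil z ^ m‖ := by rw [hkey]
      _ ≤ C * ‖‖z‖ ^ (α + m)‖ := hub
      _ = C * ‖z‖ ^ (α + m) := by
          rw [Real.norm_of_nonneg (Real.rpow_nonneg (norm_nonneg z) _)]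
  have hsplit : ‖z‖ ^ (α + m)
      = ‖z‖ ^ (α + 1) * ‖z‖ ^ (m - 1) := by
    have h1 : (α + m : ℝ) = (α + 1) + ((m - 1 : ℕ) : ℝ) := by
      have : ((m - 1 : ℕ) : ℝ) = (m : ℝ) - 1 := by
        have := Nat.cast_sub hm (R := ℝ); simpa using this
      rw [this]; ring
    rw [h1, Real.rpow_add habs, Real.rpow_natCast]
  rw [hsplit] at hnorm
  have hb : (0:ℝ) < ‖z‖ ^ (m - 1) := by
    apply pow_pos; simpa using habs
  have hm' : (1:ℝ) ≤ (m:ℝ) := by exact_mod_cast hm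
  have hR : (0:ℝ) ≤ ‖z‖ ^ (α + 1) :=
    Real.rpow_nonneg (norm_nonneg z) _
  rw [Real.norm_of_nonneg hR]
  have step1 : ‖z - ztil z‖ * ‖z‖ ^ (m - 1) * ((m:ℝ)/2)
      ≤ ‖z - ztil z‖ * ‖z‖ ^ (m - 1) * ‖S‖ :=
    mul_le_mul_of_nonneg_left hlb
      (mul_nonneg (norm_nonneg _) hb.le)
  have step2 : ‖z - ztil z‖ * ((m:ℝ)/2) * ‖z‖ ^ (m - 1)
      ≤ C * ‖z‖ ^ (α + 1) * ‖z‖ ^ (m - 1) := by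
    nlinarith [hnorm, step1]
  have hcancel : ‖z - ztil z‖ * ((m:ℝ)/2) ≤ C * ‖z‖ ^ (α + 1) :=
    le_of_mul_le_mul_right step2 hb
  have hmpos : (0:ℝ) < (m:ℝ)/2 := by linarith
  have hfin : ‖z - ztil z‖ ≤ C * ‖z‖ ^ (α + 1) / ((m:ℝ)/2) :=
    (le_div_iff₀ hmpos).mpr hcancel
  have heq : C * ‖z‖ ^ (α + 1) / ((m:ℝ)/2)
      = C * (2 / (m:ℝ)) * ‖z‖ ^ (α + 1) := by
    have : (m:ℝ) ≠ 0 := by linarith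
    field_simp
  linarith [hfin, heq.le]
end
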